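/- In the nested logit model with a fixed tree, let x* be a leaf with root-to-leaf path v₁,…,v_ℓ = x*. Adding a new leaf z to the tree leaves the choice probability of x* relative to any sibling-subtree of x*'s ancestors unchanged unless z is attached as a child of some node on the path v₁,…,v_{ℓ−1} (i.e., z becomes a sibling of an ancestor of x* or of x* itself); concretely, if z is attached strictly inside a subtree rooted at a node not on x*'s path, then P(x* | C ∪ {z}) / P(y | C ∪ {z}) ≥ P(x* | C) / P(y | C) for every y ∈ C with y ≠ x* lying outside that subtree. -/

import Mathlib

open Finset

variable {V : Type*} [DecidableEq V]

/-- Nodes of the induced tree `T(C)`: all nodes lying on the root-to-leaf path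
of some item of the choice set `C`. -/
def nlActive (pathTo : V → List V) (C : Finset V) : Finset V :=
  C.biUnion (fun x => (pathTo x).toFinset)

/-- Nested-logit choice probability of the leaf `x` given choice set `C`:
the product over the non-root nodes `v` on `x`'s root-to-leaf path of the
softmax probability of `v` among the active nodes sharing `v`'s parent. -/
noncomputable def nlProb (root : V) (par : V → V) (util : V → ℝ)
    (pathTo : V → List V) (C : Finset V) (x : V) : ℝ :=
  ∏ v ∈ (pathTo x).toFinset.erase root,
    Real.exp (util v) /
      ∑ w ∈ (nlActive pathTo C).filter (fun w => par w = par v), Real.exp (util w)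

/-- Paths are suffix-closed: the path of any node on `x`'s path is a suffix of
`x`'s path. -/
lemma nl_path_suffix (root : V) (par : V → V) (pathTo : V → List V)
    (hroot : pathTo root = [root])
    (hpath : ∀ v, v ≠ root → pathTo v = v :: pathTo (par v)) :
    ∀ n x, (pathTo x).length ≤ n → ∀ v ∈ pathTo x, pathTo v <:+ pathTo x := by
  intro n
  induction n with
  | zero =>
    intro x hx v hv
    have : pathTo x = [] := List.length_eq_zero_iff.mp (Nat.le_zero.mp hx)
    rw [this] at hv; exact absurd hv List.not_mem_nil
  | succ n ih =>
    intro x hx v hv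
    by_cases h : x = root
    · rw [h, hroot] at hv ⊢
      have : v = root := by simpa using hv
      rw [this, hroot]
    · rw [hpath x h] at hv hx ⊢
      rcases List.mem_cons.mp hv with rfl | hv'
      · rw [hpath v h]
      · have hlen : (pathTo (par x)).length ≤ n := by
          have := hx; simp at this; omega
        exact (ih (par x) hlen v hv').trans (List.suffix_cons x _)

lemma nl_mem_path_self (root : V) (par : V → V) (pathTo : V → List V)
    (hroot : pathTo root = [root])
    (hpath : ∀ v, v ≠ root → pathTo v = v :: pathTo (par v))
    (x : V) : x ∈ pathTo x := by
  by_cases h : x = root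
  · subst h; rw [hroot]; exact List.mem_singleton.mpr rfl
  · rw [hpath x h]; exact List.mem_cons_self

/-- Adding a leaf `z` inside the subtree of `s` does not change the choice
probability of any node `t` whose path avoids `s`. -/
lemma nl_prob_unchanged (root : V) (par : V → V) (util : V → ℝ) (pathTo : V → List V)
    (hroot : pathTo root = [root])
    (hpath : ∀ v, v ≠ root → pathTo v = v :: pathTo (par v))
    (C : Finset V) (z s : V)
    (hsActive : s ∈ nlActive pathTo C)
    (hzIn : s ∈ pathTo z)
    (t : V) (hst : s ∉ pathTo t) :
    nlProb root par util pathTo (insert z C) t = nlProb root par util pathTo C t := by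
  have suff : ∀ x, ∀ v ∈ pathTo x, pathTo v <:+ pathTo x := fun x =>
    nl_path_suffix root par pathTo hroot hpath (pathTo x).length x le_rfl
  have memtrans : ∀ {a b c : V}, a ∈ pathTo b → b ∈ pathTo c → a ∈ pathTo c := by
    intro a b c hab hbc
    exact (suff c b hbc).subset hab
  unfold nlProb
  apply Finset.prod_congr rfl
  intro v hv
  have hvroot : v ≠ root := (Finset.mem_erase.mp hv).1
  have hvt : v ∈ pathTo t := List.mem_toFinset.mp (Finset.mem_erase.mp hv).2
  congr 1
  apply Finset.sum_congr _ (fun _ _ => rfl)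
  ext w
  simp only [Finset.mem_filter, and_congr_left_iff]
  intro hpw
  constructor
  · intro hw
    rw [nlActive, Finset.biUnion_insert, Finset.mem_union] at hw
    rcases hw with hw | hw
    · -- w is on z's path
      have hwz : w ∈ pathTo z := List.mem_toFinset.mp hw
      rcases List.suffix_or_suffix_of_suffix (suff z w hwz) (suff z s hzIn) with hws | hsw
      · -- pathTo w <:+ pathTo s : w ∈ pathTo s, so w is active in C
        have hwps : w ∈ pathTo s :=
          hws.subset (nl_mem_path_self root par pathTo hroot hpath w)
        rw [nlActive, Finset.mem_biUnion] at hsActive ⊢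
        obtain ⟨c, hcC, hsc⟩ := hsActive
        exact ⟨c, hcC, List.mem_toFinset.mpr
          (memtrans hwps (List.mem_toFinset.mp hsc))⟩
      · -- pathTo s <:+ pathTo w : s ∈ pathTo w
        have hspw : s ∈ pathTo w :=
          hsw.subset (nl_mem_path_self root par pathTo hroot hpath s)
        by_cases hws' : w = s
        · subst hws'; exact hsActive
        · have hwroot : w ≠ root := by
            intro h; subst h
            rw [hroot] at hspw
            exact hws' (List.mem_singleton.mp hspw).symm
          rw [hpath w hwroot] at hspw
          rcases List.mem_cons.mp hspw with h | h
          · exact absurd h.symm hws'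
          · rw [hpw] at h
            have : s ∈ pathTo v := by
              rw [hpath v hvroot]; exact List.mem_cons_of_mem v h
            exact absurd (memtrans this hvt) hst
    · exact hw
  · intro hw
    rw [nlActive, Finset.biUnion_insert, Finset.mem_union]
    exact Or.inr hw

/-- If a new leaf `z` is attached strictly inside a subtree of `T(C)` rooted at a
node `s` that is not on the path of `x*` (and `y` also lies outside that
subtree), then adding `z` cannot decrease the relative choice probability of
`x*` versus `y`. -/
theorem nested_logit_add_off_path
    (root : V) (par : V → V) (util : V → ℝ) (pathTo : V → List V)
    -- tree structure: paths go from a node up to the root via `par`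
    (hroot : pathTo root = [root])
    (hpath : ∀ v, v ≠ root → pathTo v = v :: pathTo (par v))
    (C : Finset V) (x y z s : V)
    (hxC : x ∈ C) (hyC : y ∈ C) (hxy : y ≠ x) (hzC : z ∉ C)
    -- `s` is a node of the induced tree `T(C)`
    (hsActive : s ∈ nlActive pathTo C)
    -- `z` is attached strictly inside the subtree rooted at `s`
    (hzIn : s ∈ pathTo z) (hzs : z ≠ s)
    -- `s` is not on `x`'s path, and `y` lies outside the subtree rooted at `s`
    (hsx : s ∉ pathTo x) (hsy : s ∉ pathTo y) :
    nlProb root par util pathTo (insert z C) x / nlProb root par util pathTo (insert z C) y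
      ≥ nlProb root par util pathTo C x / nlProb root par util pathTo C y := by
  rw [nl_prob_unchanged root par util pathTo hroot hpath C z s hsActive hzIn x hsx,
      nl_prob_unchanged root par util pathTo hroot hpath C z s hsActive hzIn y hsy]
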